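/- Let T be a real symmetric positive-definite 4×4 matrix and let g := diag(1,−1,−1,−1) be the Minkowski metric matrix. Then the matrix g·T is diagonalizable over ℝ with all eigenvalues real and nonzero, exactly one eigenvalue is positive and this positive eigenvalue is simple, while the other three eigenvalues are negative. Moreover, every eigenvector U = (U₀,U₁,U₂,U₃) of g·T associated with the positive eigenvalue satisfies Uᵀ g U > 0, i.e. U₀² > U₁² + U₂² + U₃²; consequently U₀ ≠ 0 and the vector u := −(U₁,U₂,U₃)/U₀ ∈ ℝ³ satisfies |u| < 1. -/

import Mathlib

set_option maxHeartbeats 1000000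

open Matrix

lemma gg_one : (Matrix.diagonal ![1,-1,-1,-1] : Matrix (Fin 4) (Fin 4) ℝ) * Matrix.diagonal ![1,-1,-1,-1] = 1 := by
  rw [Matrix.diagonal_mul_diagonal]
  have : (fun i => ![1,-1,-1,-1] i * ![(1:ℝ),-1,-1,-1] i) = fun _ => (1:ℝ) := by
    funext i; fin_cases i <;> norm_num
  rw [this, Matrix.diagonal_one]

lemma g_form (x : Fin 4 → ℝ) :
    x ⬝ᵥ (Matrix.diagonal ![1,-1,-1,-1] : Matrix (Fin 4) (Fin 4) ℝ) *ᵥ x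
      = x 0 ^ 2 - x 1 ^ 2 - x 2 ^ 2 - x 3 ^ 2 := by
  simp [dotProduct, Fin.sum_univ_four, Matrix.mulVec_diagonal]
  ring

lemma g_det : (Matrix.diagonal ![1,-1,-1,-1] : Matrix (Fin 4) (Fin 4) ℝ).det = -1 := by
  simp [Matrix.det_diagonal, Fin.prod_univ_four]

lemma g_herm : (Matrix.diagonal ![1,-1,-1,-1] : Matrix (Fin 4) (Fin 4) ℝ).IsHermitian :=
  Matrix.isHermitian_diagonal _

open scoped MatrixOrder in
lemma stmt1_part1 (T : Matrix (Fin 4) (Fin 4) ℝ) (hT : T.PosDef) :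
    (∃ P : Matrix (Fin 4) (Fin 4) ℝ, IsUnit P ∧
      ∃ d : Fin 4 → ℝ,
        (Matrix.diagonal ![1,-1,-1,-1] : Matrix (Fin 4) (Fin 4) ℝ) * T = P * Matrix.diagonal d * P⁻¹ ∧
        (∀ i, d i ≠ 0) ∧
        ∃ i, 0 < d i ∧ ∀ j, j ≠ i → d j < 0) := by
  set g : Matrix (Fin 4) (Fin 4) ℝ := Matrix.diagonal ![1,-1,-1,-1] with hgdef
  set S := CFC.sqrt T with hSdef
  have hSS : S * S = T := CFC.sqrt_mul_sqrt_self T hT.posSemidef.nonneg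
  have hSherm : S.IsHermitian := (CFC.sqrt_nonneg T).posSemidef.1
  have hst : Sᵀ = S := by
    rw [← Matrix.conjTranspose_eq_transpose_of_trivial]; exact hSherm
  have hdetS : S.det ≠ 0 := by
    intro h
    have := hT.det_pos
    rw [← hSS, Matrix.det_mul, h, mul_zero] at this
    exact lt_irrefl _ this
  have hdetSU : IsUnit S.det := isUnit_iff_ne_zero.mpr hdetS
  set A := S * g * S with hAdef
  have hA : A.IsHermitian := by
    have := Matrix.isHermitian_mul_mul_conjTranspose S g_herm
    rwa [hSherm] at this
  set d := hA.eigenvalues with hddef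
  set V := (hA.eigenvectorUnitary : Matrix (Fin 4) (Fin 4) ℝ) with hVdef
  have hspec : A = V * Matrix.diagonal d * star V := by
    have := hA.spectral_theorem
    rw [Unitary.conjStarAlgAut_apply] at this
    exact this
  have hVs : star V * V = 1 := (Matrix.mem_unitaryGroup_iff').mp hA.eigenvectorUnitary.2
  have hVs' : V * star V = 1 := (Matrix.mem_unitaryGroup_iff).mp hA.eigenvectorUnitary.2
  have hVinv : V⁻¹ = star V := Matrix.inv_eq_left_inv hVs
  have hVU : IsUnit V := by
    rw [Matrix.isUnit_iff_isUnit_det]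
    exact IsUnit.of_mul_eq_one _ (by rw [← Matrix.det_mul, hVs', Matrix.det_one])
  -- P
  set P := S⁻¹ * V with hPdef
  have hSinv : S⁻¹ * S = 1 := Matrix.nonsing_inv_mul _ hdetSU
  have hSinv' : S * S⁻¹ = 1 := Matrix.mul_nonsing_inv _ hdetSU
  have hPU : IsUnit P := by
    apply IsUnit.mul _ hVU
    exact (Matrix.isUnit_nonsing_inv_iff).mpr (Matrix.isUnit_iff_isUnit_det S |>.mpr hdetSU)
  have hPinv : P⁻¹ = star V * S := by
    rw [hPdef, Matrix.mul_inv_rev, hVinv, Matrix.nonsing_inv_nonsing_inv _ hdetSU]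
  have hGT : g * T = P * Matrix.diagonal d * P⁻¹ := by
    rw [hPinv, hPdef]
    symm
    calc S⁻¹ * V * Matrix.diagonal d * (star V * S)
        = S⁻¹ * (V * Matrix.diagonal d * star V) * S := by simp only [Matrix.mul_assoc]
      _ = S⁻¹ * A * S := by rw [← hspec]
      _ = (S⁻¹ * S) * (g * (S * S)) := by simp only [hAdef, Matrix.mul_assoc]
      _ = g * T := by rw [hSinv, hSS, Matrix.one_mul]
  -- determinant
  have hdetA : A.det < 0 := by
    have : A.det = -(S.det * S.det) := by
      rw [hAdef, Matrix.det_mul, Matrix.det_mul, g_det]; ring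
    rw [this]
    have : 0 < S.det * S.det := mul_self_pos.mpr hdetS
    linarith
  have hprod : ∏ i, d i = A.det := by
    have := hA.det_eq_prod_eigenvalues
    simpa using this.symm
  have hne : ∀ i, d i ≠ 0 := by
    intro i h
    rw [Finset.prod_eq_zero (Finset.mem_univ i) h] at hprod
    rw [← hprod] at hdetA
    exact lt_irrefl _ hdetA
  -- at most one positive eigenvalue
  have hkey : ∀ i j : Fin 4, i ≠ j → 0 < d i → 0 < d j → False := by
    intro i j hij hdi hdj
    set u : Fin 4 → ℝ := ⇑(hA.eigenvectorBasis i) with hudef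
    set v : Fin 4 → ℝ := ⇑(hA.eigenvectorBasis j) with hvdef
    have horth := orthonormal_iff_ite.mp hA.eigenvectorBasis.orthonormal
    have huu : u ⬝ᵥ u = 1 := by
      have := horth i i
      simpa [PiLp.inner_apply, dotProduct, -inner_self_eq_norm_sq_to_K, -EuclideanSpace.inner_eq_star_dotProduct] using this
    have hvv : v ⬝ᵥ v = 1 := by
      have := horth j j
      simpa [PiLp.inner_apply, dotProduct, -inner_self_eq_norm_sq_to_K, -EuclideanSpace.inner_eq_star_dotProduct] using this
    have huv : u ⬝ᵥ v = 0 := by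
      have := horth i j
      simp only [hij, if_false] at this
      simpa [PiLp.inner_apply, dotProduct, mul_comm] using this
    have hvu : v ⬝ᵥ u = 0 := by rw [dotProduct_comm]; exact huv
    have hAu : A *ᵥ u = d i • u := hA.mulVec_eigenvectorBasis i
    have hAv : A *ᵥ v = d j • v := hA.mulVec_eigenvectorBasis j
    have quad : ∀ a b : ℝ, (a • u + b • v) ⬝ᵥ A *ᵥ (a • u + b • v) = a^2 * d i + b^2 * d j := by
      intro a b
      rw [Matrix.mulVec_add, Matrix.mulVec_smul, Matrix.mulVec_smul, hAu, hAv]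
      simp [add_dotProduct, dotProduct_add, smul_dotProduct,
        dotProduct_smul, huu, hvv, huv, hvu, smul_eq_mul]
      ring
    have transfer : ∀ w : Fin 4 → ℝ, (S *ᵥ w) ⬝ᵥ g *ᵥ (S *ᵥ w) = w ⬝ᵥ A *ᵥ w := by
      intro w
      rw [Matrix.mulVec_mulVec, dotProduct_mulVec]
      have h1 : S *ᵥ w = w ᵥ* S := by rw [← Matrix.mulVec_transpose, hst]
      rw [h1, Matrix.vecMul_vecMul, ← Matrix.mul_assoc, ← hAdef, ← dotProduct_mulVec]
    -- choose a b
    have main : ∀ a b : ℝ, (a ≠ 0 ∨ b ≠ 0) →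
        a * (S *ᵥ u) 0 + b * (S *ᵥ v) 0 = 0 → False := by
      intro a b hab h0
      set w := a • u + b • v with hwdef
      have hx0 : (S *ᵥ w) 0 = 0 := by
        rw [hwdef, Matrix.mulVec_add, Matrix.mulVec_smul, Matrix.mulVec_smul]
        simpa [smul_eq_mul] using h0
      have hqpos : 0 < (S *ᵥ w) ⬝ᵥ g *ᵥ (S *ᵥ w) := by
        rw [transfer, hwdef, quad]
        rcases hab with ha | hb
        · have : 0 < a^2 * d i := by positivity
          nlinarith [sq_nonneg b, mul_nonneg (sq_nonneg b) hdj.le]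
        · have : 0 < b^2 * d j := by positivity
          nlinarith [mul_nonneg (sq_nonneg a) hdi.le]
      rw [hgdef, g_form, hx0] at hqpos
      nlinarith [sq_nonneg ((S *ᵥ w) 1), sq_nonneg ((S *ᵥ w) 2), sq_nonneg ((S *ᵥ w) 3)]
    by_cases hp : (S *ᵥ u) 0 = 0
    · exact main 1 0 (Or.inl one_ne_zero) (by rw [hp]; ring)
    · exact main ((S *ᵥ v) 0) (-(S *ᵥ u) 0) (Or.inr (by simpa using hp)) (by ring)
  -- at least one positive
  have hex : ∃ i, 0 < d i := by
    by_contra h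
    push_neg at h
    have hneg : ∀ i, d i < 0 := fun i => lt_of_le_of_ne (h i) (hne i)
    have : 0 < ∏ i, d i := by
      rw [Fin.prod_univ_four]
      have h01 : 0 < d 0 * d 1 := mul_pos_of_neg_of_neg (hneg 0) (hneg 1)
      have h23 : 0 < d 2 * d 3 := mul_pos_of_neg_of_neg (hneg 2) (hneg 3)
      nlinarith
    rw [hprod] at this
    linarith
  obtain ⟨i, hi⟩ := hex
  refine ⟨P, hPU, d, hGT, hne, i, hi, ?_⟩
  intro j hj
  rcases lt_or_ge (d j) 0 with h | h
  · exact h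
  · exact absurd hi (fun hi' => hkey j i hj (lt_of_le_of_ne h (Ne.symm (hne j))) hi')

lemma stmt1_part2 (T : Matrix (Fin 4) (Fin 4) ℝ) (hT : T.PosDef) :
    ∀ ε : ℝ, 0 < ε → ∀ U : Fin 4 → ℝ, U ≠ 0 →
      ((Matrix.diagonal ![1,-1,-1,-1] : Matrix (Fin 4) (Fin 4) ℝ) * T) *ᵥ U = ε • U →
      0 < U ⬝ᵥ (Matrix.diagonal ![1,-1,-1,-1] : Matrix (Fin 4) (Fin 4) ℝ) *ᵥ U ∧
      U 1 ^ 2 + U 2 ^ 2 + U 3 ^ 2 < U 0 ^ 2 ∧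
      U 0 ≠ 0 ∧
      (-(U 1 / U 0)) ^ 2 + (-(U 2 / U 0)) ^ 2 + (-(U 3 / U 0)) ^ 2 < 1 := by
  intro ε hε U hU h
  set g : Matrix (Fin 4) (Fin 4) ℝ := Matrix.diagonal ![1,-1,-1,-1] with hgdef
  have key : g * (g * T) = T := by
    rw [← Matrix.mul_assoc, hgdef, gg_one, Matrix.one_mul]
  have hTU : T *ᵥ U = ε • (g *ᵥ U) := by
    have := congrArg (fun v => g *ᵥ v) h
    simpa [Matrix.mulVec_mulVec, key, Matrix.mulVec_smul] using this
  have hpos : 0 < U ⬝ᵥ T *ᵥ U := by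
    have := hT.dotProduct_mulVec_pos hU
    simpa using this
  have hq : 0 < U ⬝ᵥ g *ᵥ U := by
    rw [hTU] at hpos
    have heq : U ⬝ᵥ ε • (g *ᵥ U) = ε * (U ⬝ᵥ g *ᵥ U) := by
      simp [dotProduct_smul, smul_eq_mul]
    rw [heq] at hpos
    nlinarith
  have hform := g_form U
  rw [hgdef] at hq ⊢
  rw [hform] at hq
  have h2 : U 1 ^ 2 + U 2 ^ 2 + U 3 ^ 2 < U 0 ^ 2 := by linarith
  have h0 : U 0 ≠ 0 := by
    intro h0
    rw [h0] at h2
    nlinarith [sq_nonneg (U 1), sq_nonneg (U 2), sq_nonneg (U 3)]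
  have hU0sq : 0 < U 0 ^ 2 := by positivity
  refine ⟨by rw [g_form]; linarith, h2, h0, ?_⟩
  have : (-(U 1 / U 0)) ^ 2 + (-(U 2 / U 0)) ^ 2 + (-(U 3 / U 0)) ^ 2
      = (U 1 ^ 2 + U 2 ^ 2 + U 3 ^ 2) / U 0 ^ 2 := by
    field_simp
  rw [this, div_lt_one hU0sq]
  exact h2

theorem stmt1 (T g : Matrix (Fin 4) (Fin 4) ℝ)
    (hg : g = Matrix.diagonal ![1, -1, -1, -1])
    (hT : T.PosDef) :
    -- `g·T` is diagonalizable over ℝ, with all eigenvalues real and nonzero,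
    -- exactly one positive (simple) eigenvalue, the other three negative:
    (∃ P : Matrix (Fin 4) (Fin 4) ℝ, IsUnit P ∧
      ∃ d : Fin 4 → ℝ,
        g * T = P * Matrix.diagonal d * P⁻¹ ∧
        (∀ i, d i ≠ 0) ∧
        ∃ i, 0 < d i ∧ ∀ j, j ≠ i → d j < 0) ∧
    -- every eigenvector associated with a positive eigenvalue is timelike:
    ∀ ε : ℝ, 0 < ε → ∀ U : Fin 4 → ℝ, U ≠ 0 → (g * T) *ᵥ U = ε • U →
      0 < U ⬝ᵥ g *ᵥ U ∧
      U 1 ^ 2 + U 2 ^ 2 + U 3 ^ 2 < U 0 ^ 2 ∧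
      U 0 ≠ 0 ∧
      (-(U 1 / U 0)) ^ 2 + (-(U 2 / U 0)) ^ 2 + (-(U 3 / U 0)) ^ 2 < 1 := by
  subst hg
  exact ⟨stmt1_part1 T hT, stmt1_part2 T hT⟩
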